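/- Let Q be the poset on {H_1 < H_2 < ... < H_n} ∪ {V_1 < ... < V_m} given by the two chains together with the extra cover relations H_{n-s} < V_{t+1} (so the cover relation from one chain to the other), with 0 < s < n and 0 < t < m, and suppose every maximal chain of Q has m elements (i.e., m ≥ n and m ≥ n + m - (s+t)). Then the number of strictly order-reversing surjections realizing minimal elements of T(Q̂) — equivalently, the number of integer sequences 0 < a_1 < a_2 < ... < a_n ≤ m with m - t < a_{s+1} ≤ m - (n - s) + 1 — equals Σ_{i = m-t}^{m-(n-s)} C(i, s)·C(m-i-1, n-s-1). -/

import Mathlib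

open Finset

/-- Inverse map: rebuild a strictly increasing sequence from two finsets and middle value. -/
def back (n m s v : ℕ) (A B : Finset ℕ) : Fin n → Fin (m + 1) := fun j =>
  if _ : (j : ℕ) < s then
    ⟨min ((A.sort (· ≤ ·)).getD j 0) m, Nat.lt_succ_of_le (min_le_right _ _)⟩
  else if _ : (j : ℕ) = s then ⟨min v m, Nat.lt_succ_of_le (min_le_right _ _)⟩
  else ⟨min ((B.sort (· ≤ ·)).getD ((j : ℕ) - s - 1) 0) m,
    Nat.lt_succ_of_le (min_le_right _ _)⟩

lemma back_apply_lt {n m s v : ℕ} {A : Finset ℕ} (B : Finset ℕ) (hA : A.card = s)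
    (hAm : ∀ x ∈ A, x ≤ m) (j : Fin n) (h : (j : ℕ) < s) :
    (back n m s v A B j : ℕ) = A.orderEmbOfFin hA ⟨j, h⟩ := by
  simp only [back, dif_pos h]
  have hlen : (j : ℕ) < (A.sort (· ≤ ·)).length := by
    rw [Finset.length_sort, hA]; exact h
  have : (A.sort (· ≤ ·)).getD (j : ℕ) 0 = A.orderEmbOfFin hA ⟨j, h⟩ := by
    rw [Finset.orderEmbOfFin_apply, List.getD_eq_getElem _ _ hlen]; rfl
  rw [this]
  exact min_eq_left (hAm _ (Finset.orderEmbOfFin_mem A hA ⟨j, h⟩))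

lemma back_apply_eq {n m s v : ℕ} (A B : Finset ℕ) (hvm : v ≤ m) (j : Fin n)
    (h : (j : ℕ) = s) : (back n m s v A B j : ℕ) = v := by
  simp only [back, dif_neg (by omega : ¬ (j : ℕ) < s), dif_pos h]
  exact min_eq_left hvm

lemma back_apply_gt {n m s v : ℕ} (A : Finset ℕ) {B : Finset ℕ} (hB : B.card = n - s - 1)
    (hBm : ∀ x ∈ B, x ≤ m) (j : Fin n) (h : s < (j : ℕ)) :
    (back n m s v A B j : ℕ) =
      B.orderEmbOfFin hB ⟨(j : ℕ) - s - 1, by have := j.2; omega⟩ := by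
  simp only [back, dif_neg (by omega : ¬ (j : ℕ) < s), dif_neg (by omega : ¬ (j : ℕ) = s)]
  have hlen : (j : ℕ) - s - 1 < (B.sort (· ≤ ·)).length := by
    rw [Finset.length_sort, hB]; have := j.2; omega
  have : (B.sort (· ≤ ·)).getD ((j : ℕ) - s - 1) 0 =
      B.orderEmbOfFin hB ⟨(j : ℕ) - s - 1, by have := j.2; omega⟩ := by
    rw [Finset.orderEmbOfFin_apply, List.getD_eq_getElem _ _ hlen]; rfl
  rw [this]
  exact min_eq_left (hBm _ (Finset.orderEmbOfFin_mem B hB _))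

lemma slice_count (n m s v : ℕ) (hs0 : 0 < s) (hsn : s < n) (hv1 : 0 < v) (hvm : v ≤ m) :
    (Finset.univ.filter (fun a : Fin n → Fin (m + 1) =>
      (∀ i j : Fin n, i < j → a i < a j) ∧ 0 < (a ⟨0, Nat.zero_lt_of_lt hsn⟩ : ℕ) ∧
      (a ⟨s, hsn⟩ : ℕ) = v)).card
    = (v - 1).choose s * (m - v).choose (n - s - 1) := by
  have hcard : (v - 1).choose s * (m - v).choose (n - s - 1)
      = (((Finset.Icc 1 (v - 1)).powersetCard s) ×ˢ
          ((Finset.Icc (v + 1) m).powersetCard (n - s - 1))).card := by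
    rw [Finset.card_product, Finset.card_powersetCard, Finset.card_powersetCard,
      Nat.card_Icc, Nat.card_Icc]
    congr 2 <;> omega
  rw [hcard]
  refine Finset.card_bij'
    (fun a _ => (Finset.univ.image (fun j : Fin s => ((a ⟨j, j.2.trans hsn⟩ : Fin (m+1)) : ℕ)),
      Finset.univ.image (fun j : Fin (n - s - 1) =>
        ((a ⟨s + 1 + j, by have := j.2; omega⟩ : Fin (m+1)) : ℕ))))
    (fun p _ => back n m s v p.1 p.2) ?_ ?_ ?_ ?_
  · -- forward lands in target
    rintro a ha
    simp only [Finset.mem_filter, Finset.mem_univ, true_and] at ha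
    obtain ⟨hmono, h0, hsv⟩ := ha
    simp only [Finset.mem_product, Finset.mem_powersetCard]
    have hsm1 : StrictMono (fun j : Fin s => ((a ⟨j, j.2.trans hsn⟩ : Fin (m+1)) : ℕ)) :=
      fun x y h => hmono ⟨x, x.2.trans hsn⟩ ⟨y, y.2.trans hsn⟩ h
    have hinj1 := hsm1.injective
    have hsm2 : StrictMono (fun j : Fin (n - s - 1) =>
        ((a ⟨s + 1 + j, by have := j.2; omega⟩ : Fin (m+1)) : ℕ)) := by
      intro x y h
      have hxy : (x : ℕ) < (y : ℕ) := h
      exact hmono ⟨s + 1 + x, by have := x.2; omega⟩ ⟨s + 1 + y, by have := y.2; omega⟩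
        (by simp only [Fin.mk_lt_mk]; omega)
    have hinj2 := hsm2.injective
    refine ⟨⟨?_, ?_⟩, ?_, ?_⟩
    · intro x hx
      simp only [Finset.mem_image, Finset.mem_univ, true_and] at hx
      obtain ⟨j, rfl⟩ := hx
      have h1 : (a ⟨0, by omega⟩ : Fin (m+1)) ≤ a ⟨j, j.2.trans hsn⟩ := by
        rcases Nat.eq_zero_or_pos (j : ℕ) with h | h
        · exact le_of_eq (by congr 1; exact Fin.ext h.symm)
        · exact le_of_lt (hmono _ _ (by simp only [Fin.mk_lt_mk]; omega))
      have h2 : a ⟨j, j.2.trans hsn⟩ < a ⟨s, hsn⟩ :=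
        hmono _ _ (by simp only [Fin.mk_lt_mk]; exact j.2)
      simp only [Finset.mem_Icc]
      have h1' : ((a ⟨0, by omega⟩ : Fin (m+1)) : ℕ) ≤ (a ⟨j, j.2.trans hsn⟩ : ℕ) := h1
      have h2' : ((a ⟨j, j.2.trans hsn⟩ : Fin (m+1)) : ℕ) < v := by rw [← hsv]; exact h2
      omega
    · rw [Finset.card_image_of_injective _ hinj1, Finset.card_univ, Fintype.card_fin]
    · intro x hx
      simp only [Finset.mem_image, Finset.mem_univ, true_and] at hx
      obtain ⟨j, rfl⟩ := hx
      have h2 : a ⟨s, hsn⟩ < a ⟨s + 1 + j, by have := j.2; omega⟩ :=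
        hmono _ _ (by simp only [Fin.mk_lt_mk]; omega)
      have h2' : v < ((a ⟨s + 1 + j, by have := j.2; omega⟩ : Fin (m+1)) : ℕ) := by
        rw [← hsv]; exact h2
      have h3 : ((a ⟨s + 1 + j, by have := j.2; omega⟩ : Fin (m+1)) : ℕ) ≤ m :=
        Nat.lt_succ_iff.mp (a _).2
      simp only [Finset.mem_Icc]; omega
    · rw [Finset.card_image_of_injective _ hinj2, Finset.card_univ, Fintype.card_fin]
  · -- backward lands in source
    rintro ⟨A, B⟩ hp
    simp only [Finset.mem_product, Finset.mem_powersetCard] at hp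
    obtain ⟨⟨hAsub, hAcard⟩, hBsub, hBcard⟩ := hp
    have hAm : ∀ x ∈ A, x ≤ m := fun x hx => by
      have := hAsub hx; simp only [Finset.mem_Icc] at this; omega
    have hBm : ∀ x ∈ B, x ≤ m := fun x hx => by
      have := hBsub hx; simp only [Finset.mem_Icc] at this; omega
    have hAv : ∀ x ∈ A, 1 ≤ x ∧ x ≤ v - 1 := fun x hx => by
      have := hAsub hx; simp only [Finset.mem_Icc] at this; exact this
    have hBv : ∀ x ∈ B, v + 1 ≤ x ∧ x ≤ m := fun x hx => by
      have := hBsub hx; simp only [Finset.mem_Icc] at this; exact this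
    simp only [Finset.mem_filter, Finset.mem_univ, true_and]
    refine ⟨?_, ?_, ?_⟩
    · -- strict mono
      intro i j hij
      have hij' : (i : ℕ) < (j : ℕ) := hij
      rw [Fin.lt_iff_val_lt_val]
      rcases lt_trichotomy (j : ℕ) s with hj | hj | hj
      · have hi : (i : ℕ) < s := by omega
        rw [back_apply_lt B hAcard hAm i hi, back_apply_lt B hAcard hAm j hj]
        exact (A.orderEmbOfFin hAcard).strictMono (by simp only [Fin.mk_lt_mk]; omega)
      · have hi : (i : ℕ) < s := by omega
        rw [back_apply_lt B hAcard hAm i hi, back_apply_eq A B hvm j hj]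
        have := (hAv _ (Finset.orderEmbOfFin_mem A hAcard ⟨i, hi⟩)).2
        omega
      · rw [back_apply_gt A hBcard hBm j hj]
        have hBj := (hBv _ (Finset.orderEmbOfFin_mem B hBcard
          ⟨(j : ℕ) - s - 1, by have := j.2; omega⟩)).1
        rcases lt_trichotomy (i : ℕ) s with hi | hi | hi
        · rw [back_apply_lt B hAcard hAm i hi]
          have := (hAv _ (Finset.orderEmbOfFin_mem A hAcard ⟨i, hi⟩)).2
          omega
        · rw [back_apply_eq A B hvm i hi]; omega
        · rw [back_apply_gt A hBcard hBm i hi]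
          exact (B.orderEmbOfFin hBcard).strictMono (by simp only [Fin.mk_lt_mk]; omega)
    · -- a 0 > 0
      rw [back_apply_lt (v := v) B hAcard hAm ⟨0, by omega⟩ (by simpa using hs0)]
      exact (hAv _ (Finset.orderEmbOfFin_mem A hAcard _)).1
    · exact back_apply_eq A B hvm ⟨s, hsn⟩ rfl
  · -- left inverse
    rintro a ha
    beta_reduce
    simp only [Finset.mem_filter, Finset.mem_univ, true_and] at ha
    obtain ⟨hmono, h0, hsv⟩ := ha
    set A : Finset ℕ := Finset.univ.image (fun j : Fin s => ((a ⟨j, j.2.trans hsn⟩ : Fin (m+1)) : ℕ)) with hAdef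
    set B : Finset ℕ := Finset.univ.image (fun j : Fin (n - s - 1) =>
        ((a ⟨s + 1 + j, by have := j.2; omega⟩ : Fin (m+1)) : ℕ)) with hBdef
    have hsm1 : StrictMono (fun j : Fin s => ((a ⟨j, j.2.trans hsn⟩ : Fin (m+1)) : ℕ)) :=
      fun x y h => hmono ⟨x, x.2.trans hsn⟩ ⟨y, y.2.trans hsn⟩ h
    have hinj1 := hsm1.injective
    have hsm2 : StrictMono (fun j : Fin (n - s - 1) =>
        ((a ⟨s + 1 + j, by have := j.2; omega⟩ : Fin (m+1)) : ℕ)) := by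
      intro x y h
      have hxy : (x : ℕ) < (y : ℕ) := h
      exact hmono ⟨s + 1 + x, by have := x.2; omega⟩ ⟨s + 1 + y, by have := y.2; omega⟩
        (by simp only [Fin.mk_lt_mk]; omega)
    have hinj2 := hsm2.injective
    have hAcard : A.card = s := by
      rw [hAdef, Finset.card_image_of_injective _ hinj1, Finset.card_univ, Fintype.card_fin]
    have hBcard : B.card = n - s - 1 := by
      rw [hBdef, Finset.card_image_of_injective _ hinj2, Finset.card_univ, Fintype.card_fin]
    have hAm : ∀ x ∈ A, x ≤ m := by
      intro x hx
      rw [hAdef] at hx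
      simp only [Finset.mem_image, Finset.mem_univ, true_and] at hx
      obtain ⟨j, rfl⟩ := hx
      exact Nat.lt_succ_iff.mp (a _).2
    have hBm : ∀ x ∈ B, x ≤ m := by
      intro x hx
      rw [hBdef] at hx
      simp only [Finset.mem_image, Finset.mem_univ, true_and] at hx
      obtain ⟨j, rfl⟩ := hx
      exact Nat.lt_succ_iff.mp (a _).2
    -- the enumeration of A agrees with a on low indices
    have hAeq : (fun j : Fin s => ((a ⟨j, j.2.trans hsn⟩ : Fin (m+1)) : ℕ)) = A.orderEmbOfFin hAcard := by
      apply Finset.orderEmbOfFin_unique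
      · intro x; rw [hAdef]; exact Finset.mem_image_of_mem _ (Finset.mem_univ x)
      · intro x y hxy
        have := hmono ⟨x, x.2.trans hsn⟩ ⟨y, y.2.trans hsn⟩ (by exact hxy)
        exact this
    have hBeq : (fun j : Fin (n - s - 1) => ((a ⟨s + 1 + j, by have := j.2; omega⟩ : Fin (m+1)) : ℕ))
        = B.orderEmbOfFin hBcard := by
      apply Finset.orderEmbOfFin_unique
      · intro x; rw [hBdef]; exact Finset.mem_image_of_mem _ (Finset.mem_univ x)
      · intro x y hxy
        have := hmono ⟨s + 1 + x, by have := x.2; omega⟩ ⟨s + 1 + y, by have := y.2; omega⟩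
          (by simp only [Fin.mk_lt_mk]; omega)
        exact this
    funext j
    apply Fin.ext
    rcases lt_trichotomy (j : ℕ) s with hj | hj | hj
    · rw [back_apply_lt (v := v) B hAcard hAm j hj, ← hAeq]
    · rw [back_apply_eq A B hvm j hj, ← hsv]
      exact congrArg (fun z => ((a z : Fin (m+1)) : ℕ)) (Fin.ext hj.symm)
    · rw [back_apply_gt A hBcard hBm j hj, ← hBeq]
      exact congrArg (fun z => ((a z : Fin (m+1)) : ℕ)) (Fin.ext (by simp only; omega))
  · -- right inverse
    rintro ⟨A, B⟩ hp
    beta_reduce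
    simp only [Finset.mem_product, Finset.mem_powersetCard] at hp
    obtain ⟨⟨hAsub, hAcard⟩, hBsub, hBcard⟩ := hp
    have hAm : ∀ x ∈ A, x ≤ m := fun x hx => by
      have := hAsub hx; simp only [Finset.mem_Icc] at this; omega
    have hBm : ∀ x ∈ B, x ≤ m := fun x hx => by
      have := hBsub hx; simp only [Finset.mem_Icc] at this; omega
    simp only [Prod.mk.injEq]
    constructor
    · ext x
      simp only [Finset.mem_image, Finset.mem_univ, true_and]
      constructor
      · rintro ⟨j, rfl⟩
        rw [back_apply_lt (v := v) B hAcard hAm _ (by exact j.2)]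
        exact Finset.orderEmbOfFin_mem A hAcard _
      · intro hx
        have : x ∈ Set.range (A.orderEmbOfFin hAcard) := by
          rw [Finset.range_orderEmbOfFin]; exact hx
        obtain ⟨j, hj⟩ := this
        exact ⟨j, by rw [back_apply_lt (v := v) B hAcard hAm _ (by exact j.2)]; exact hj⟩
      
    · ext x
      simp only [Finset.mem_image, Finset.mem_univ, true_and]
      constructor
      · rintro ⟨j, rfl⟩
        rw [back_apply_gt A hBcard hBm _ (by simp only; omega)]
        exact Finset.orderEmbOfFin_mem B hBcard _
      · intro hx
        have : x ∈ Set.range (B.orderEmbOfFin hBcard) := by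
          rw [Finset.range_orderEmbOfFin]; exact hx
        obtain ⟨j, hj⟩ := this
        refine ⟨j, ?_⟩
        rw [back_apply_gt A hBcard hBm _ (by simp only; omega)]
        rw [← hj]
        congr 1
        apply Fin.ext
        simp only
        have := j.2; omega

theorem stmt16 (n m s t : ℕ) (hs : 0 < s) (hsn : s < n) (ht : 0 < t) (htm : t < m)
    (hmn : n ≤ m) (hst : n ≤ s + t) :
    (Finset.univ.filter (fun a : Fin n → Fin (m + 1) =>
      (∀ i j : Fin n, i < j → a i < a j) ∧
      0 < (a ⟨0, by omega⟩ : ℕ) ∧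
      m - t < (a ⟨s, hsn⟩ : ℕ) ∧ (a ⟨s, hsn⟩ : ℕ) ≤ m - (n - s) + 1)).card =
    ∑ i ∈ Finset.Icc (m - t) (m - (n - s)),
      Nat.choose i s * Nat.choose (m - i - 1) (n - s - 1) := by
  rw [Finset.card_eq_sum_card_fiberwise (f := fun a : Fin n → Fin (m+1) => ((a ⟨s, hsn⟩ : ℕ)) - 1)
    (t := Finset.Icc (m - t) (m - (n - s)))
    (by
      intro a ha
      simp only [Finset.mem_coe, Finset.mem_filter] at ha
      simp only [Finset.mem_coe, Finset.mem_Icc]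
      omega)]
  apply Finset.sum_congr rfl
  intro i hi
  simp only [Finset.mem_Icc] at hi
  have hkey := slice_count n m s (i + 1) hs hsn (by omega) (by omega)
  rw [Nat.add_sub_cancel, show m - (i + 1) = m - i - 1 from (Nat.sub_sub m i 1).symm] at hkey
  rw [← hkey]
  clear hkey
  congr 1
  ext a
  simp only [Finset.mem_filter, Finset.mem_univ, true_and]
  constructor
  · rintro ⟨⟨hmono, h0, h1, h2⟩, hfib⟩
    refine ⟨hmono, h0, ?_⟩
    omega
  · rintro ⟨hmono, h0, hv⟩
    refine ⟨⟨hmono, h0, ?_, ?_⟩, ?_⟩ <;> omega
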